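/- Let n ≥ 1 and let φ : ℝⁿ → ℝ be a continuously differentiable, strictly convex function. Suppose there exist R > 0 and a real number d > 1 such that φ(t·x) = t^d · φ(x) for every x ∈ ℝⁿ with ‖x‖ ≥ R and every real t ≥ 1. Then the gradient map ∇φ : ℝⁿ → ℝⁿ is surjective. -/

import Mathlib

open scoped RealInnerProductSpace

/-- A continuously differentiable, strictly convex function on `ℝⁿ`
which is positively homogeneous of degree `d > 1` outside a compact set has surjective
gradient map. -/
theorem statement0 (n : ℕ) (hn : 1 ≤ n)
    (φ : EuclideanSpace ℝ (Fin n) → ℝ)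
    (hC1 : ContDiff ℝ 1 φ)
    (hconv : StrictConvexOn ℝ Set.univ φ)
    (R : ℝ) (hR : 0 < R) (d : ℝ) (hd : 1 < d)
    (hhom : ∀ x : EuclideanSpace ℝ (Fin n), R ≤ ‖x‖ →
      ∀ t : ℝ, 1 ≤ t → φ (t • x) = t ^ d * φ x) :
    Function.Surjective (gradient φ) := by
  classical
  intro y
  -- Step 1: φ is positive on the sphere of radius R.
  have h2d : (2:ℝ) ^ d < 1/2 + 1/2 * (3:ℝ) ^ d := by
    have h := (strictConvexOn_rpow hd).2 (Set.mem_Ici.2 (by norm_num : (0:ℝ) ≤ 1))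
      (Set.mem_Ici.2 (by norm_num : (0:ℝ) ≤ 3)) (by norm_num)
      (by norm_num : (0:ℝ) < 1/2) (by norm_num : (0:ℝ) < 1/2) (by norm_num)
    have e : ((1/2:ℝ)) • (1:ℝ) + (1/2:ℝ) • (3:ℝ) = 2 := by norm_num
    rw [e] at h
    simpa [smul_eq_mul, Real.one_rpow] using h
  have hφpos : ∀ u : EuclideanSpace ℝ (Fin n), ‖u‖ = R → 0 < φ u := by
    intro u hu
    have huR : R ≤ ‖u‖ := hu.ge
    have hu2 : φ ((2:ℝ) • u) = (2:ℝ) ^ d * φ u := hhom u huR 2 (by norm_num)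
    have hu3 : φ ((3:ℝ) • u) = (3:ℝ) ^ d * φ u := hhom u huR 3 (by norm_num)
    have hne : u ≠ (3:ℝ) • u := by
      intro h
      have hu0 : u ≠ 0 := by
        intro h0; rw [h0, norm_zero] at hu; exact hR.ne hu
      have : ((3:ℝ) - 1) • u = 0 := by
        rw [sub_smul, one_smul, ← h, sub_self]
      simp only [smul_eq_zero] at this
      rcases this with h' | h'
      · norm_num at h'
      · exact hu0 h'
    have hmid : (1/2 : ℝ) • u + (1/2 : ℝ) • ((3:ℝ) • u) = (2:ℝ) • u := by
      rw [smul_smul]; rw [← add_smul]; norm_num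
    have hsc := hconv.2 (Set.mem_univ u) (Set.mem_univ ((3:ℝ) • u)) hne
      (by norm_num : (0:ℝ) < 1/2) (by norm_num : (0:ℝ) < 1/2) (by norm_num)
    rw [hmid, hu2, hu3] at hsc
    simp only [smul_eq_mul] at hsc
    nlinarith [hsc, h2d]
  -- Step 2: minimum m of φ on the sphere, m > 0.
  have hsne : (Metric.sphere (0:EuclideanSpace ℝ (Fin n)) R).Nonempty := by
    refine ⟨EuclideanSpace.single (⟨0, hn⟩ : Fin n) R, ?_⟩
    rw [mem_sphere_zero_iff_norm, EuclideanSpace.norm_single]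
    exact abs_of_pos hR
  obtain ⟨u0, hu0mem, hu0min⟩ :=
    (isCompact_sphere (0:EuclideanSpace ℝ (Fin n)) R).exists_isMinOn hsne
      (hC1.continuous.continuousOn)
  set m := φ u0 with hm
  have hmpos : 0 < m := hφpos u0 (mem_sphere_zero_iff_norm.1 hu0mem)
  -- Step 3: growth bound.
  have hgrow : ∀ x : EuclideanSpace ℝ (Fin n), R ≤ ‖x‖ → m * (‖x‖ / R) ^ d ≤ φ x := by
    intro x hx
    set t := ‖x‖ / R with ht
    have ht1 : 1 ≤ t := (one_le_div hR).2 hx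
    have ht0 : 0 < t := lt_of_lt_of_le one_pos ht1
    have hxne : ‖x‖ ≠ 0 := ne_of_gt (lt_of_lt_of_le hR hx)
    set u := t⁻¹ • x with hu
    have hun : ‖u‖ = R := by
      rw [hu, norm_smul, norm_inv, Real.norm_eq_abs, abs_of_pos ht0, ht, inv_div]
      exact div_mul_cancel₀ R hxne
    have hxu : x = t • u := by
      rw [hu, smul_smul, mul_inv_cancel₀ ht0.ne', one_smul]
    have hφx : φ x = t ^ d * φ u := by
      rw [hxu]; exact hhom u hun.ge t ht1
    rw [hφx]
    have hmu : m ≤ φ u := hu0min (mem_sphere_zero_iff_norm.2 hun)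
    have htd : 0 < t ^ d := Real.rpow_pos_of_pos ht0 d
    nlinarith [hmu, htd]
  -- Step 4: ψ := φ - ⟪y, ·⟫ tends to +∞ at cocompact.
  set ψ : EuclideanSpace ℝ (Fin n) → ℝ := fun x => φ x - ⟪y, x⟫ with hψ
  have hg : Filter.Tendsto (fun s : ℝ => m * (s / R) ^ d - ‖y‖ * s)
      Filter.atTop Filter.atTop := by
    have h1 : Filter.Tendsto (fun s : ℝ => ((m / R ^ d) * s ^ (d - 1) - ‖y‖) * s)
        Filter.atTop Filter.atTop := by
      have hc : 0 < m / R ^ d := div_pos hmpos (Real.rpow_pos_of_pos hR d)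
      have h2 : Filter.Tendsto (fun s : ℝ => (m / R ^ d) * s ^ (d - 1) - ‖y‖)
          Filter.atTop Filter.atTop := by
        apply Filter.tendsto_atTop_add_const_right
        exact (tendsto_rpow_atTop (by linarith : (0:ℝ) < d - 1)).const_mul_atTop hc
      exact h2.atTop_mul_atTop₀ Filter.tendsto_id
    apply h1.congr'
    filter_upwards [Filter.eventually_gt_atTop 0] with s hs
    have hsd : s ^ (d - 1) * s = s ^ d := by
      rw [← Real.rpow_add_one hs.ne' (d - 1)]
      norm_num
    have hdiv : (s / R) ^ d = s ^ d / R ^ d := Real.div_rpow hs.le hR.le d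
    rw [hdiv, sub_mul, mul_assoc, hsd]
    ring
  have hψcoc : Filter.Tendsto ψ (Filter.cocompact (EuclideanSpace ℝ (Fin n)))
      Filter.atTop := by
    apply Filter.tendsto_atTop_mono' _ _ (hg.comp tendsto_norm_cocompact_atTop)
    filter_upwards [tendsto_norm_cocompact_atTop.eventually
      (Filter.eventually_ge_atTop R)] with x hx
    have hinn : ⟪y, x⟫ ≤ ‖y‖ * ‖x‖ := real_inner_le_norm y x
    have := hgrow x hx
    simp only [Function.comp, hψ]
    linarith
  -- Step 5: minimizer of ψ.
  have hψcont : Continuous ψ := by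
    rw [hψ]
    exact hC1.continuous.sub (InnerProductSpace.toDual ℝ (EuclideanSpace ℝ (Fin n)) y).continuous
  obtain ⟨x0, hx0⟩ := hψcont.exists_forall_le hψcoc
  have hloc : IsLocalMin ψ x0 := Filter.Eventually.of_forall hx0
  -- Step 6: derivative vanishes.
  have hφd : HasFDerivAt φ (fderiv ℝ φ x0) x0 :=
    ((hC1.differentiable one_ne_zero) x0).hasFDerivAt
  have hlind : HasFDerivAt (fun x : EuclideanSpace ℝ (Fin n) => ⟪y, x⟫)
      ((InnerProductSpace.toDual ℝ (EuclideanSpace ℝ (Fin n)) y) :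
        EuclideanSpace ℝ (Fin n) →L[ℝ] ℝ) x0 :=
    (InnerProductSpace.toDual ℝ (EuclideanSpace ℝ (Fin n)) y).hasFDerivAt
  have hψd : HasFDerivAt ψ
      (fderiv ℝ φ x0 - (InnerProductSpace.toDual ℝ (EuclideanSpace ℝ (Fin n)) y)) x0 :=
    hφd.sub hlind
  have hzero := hloc.hasFDerivAt_eq_zero hψd
  have hfd : fderiv ℝ φ x0 =
      (InnerProductSpace.toDual ℝ (EuclideanSpace ℝ (Fin n)) y :
        EuclideanSpace ℝ (Fin n) →L[ℝ] ℝ) := by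
    rwa [sub_eq_zero] at hzero
  refine ⟨x0, ?_⟩
  rw [gradient, hfd]
  exact (InnerProductSpace.toDual ℝ (EuclideanSpace ℝ (Fin n))).symm_apply_apply y
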